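/- Let ω_s = (1/2) Σ_{i=2}^{2s−1} (−1)^i e^i ∧ e^{2s+1−i} for 2 ≤ s ≤ ⌊(m+1)/2⌋ in the Chevalley–Eilenberg complex of the filiform Lie algebra 𝔪₀(m). Then each ω_s is closed (dω_s = 0) and lies in Λ²V_{2s−2} but not in Λ²V_{2s−3}. -/

import Mathlib

open Module

namespace CE

variable (L : Type) [LieRing L] [LieAlgebra ℝ L]

/-- The space of alternating `p`-forms on `L` with values in `ℝ`. -/
abbrev Form (p : ℕ) := L [⋀^Fin p]→ₗ[ℝ] ℝ

/-- Alternatization, as a linear map. -/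
noncomputable def altLin (p : ℕ) :
    MultilinearMap ℝ (fun _ : Fin p => L) ℝ →ₗ[ℝ] Form L p where
  toFun := MultilinearMap.alternatization
  map_add' _ _ := map_add _ _ _
  map_smul' c m := by
    ext v
    simp only [MultilinearMap.alternatization_apply, MultilinearMap.domDomCongr_apply,
      MultilinearMap.smul_apply, RingHom.id_apply, AlternatingMap.smul_apply,
      Finset.smul_sum]
    exact Finset.sum_congr rfl fun σ _ => smul_comm _ _ _

/-- Inclusion of alternating maps into multilinear maps, as a linear map. -/
noncomputable def toMulti (p : ℕ) :
    Form L p →ₗ[ℝ] MultilinearMap ℝ (fun _ : Fin p => L) ℝ where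
  toFun f := f.toMultilinearMap
  map_add' _ _ := rfl
  map_smul' _ _ := rfl

attribute [local instance] LieRing.ofAssociativeRing

/-- The Lie bracket of `L` as a bilinear map. -/
noncomputable def bracketL : L →ₗ[ℝ] L →ₗ[ℝ] L :=
  ((LieAlgebra.ad ℝ L).toLinearMap : L →ₗ[ℝ] Module.End ℝ L)

/-- The Chevalley–Eilenberg differential (trivial coefficients):
`(d x)(u₀, …, u_p) = ∑_{i<j} (-1)^{i+j} x([uᵢ, uⱼ], u₀, …, ûᵢ, …, ûⱼ, …, u_p)`,
so that on `1`-forms `(d x)(u, v) = -x ⁅u, v⁆`. -/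
noncomputable def ceDiff : ∀ p : ℕ, Form L p →ₗ[ℝ] Form L (p + 1)
  | 0 => 0
  | (q + 1) =>
    (-(1 : ℝ) / (2 * q.factorial)) •
      ((altLin L (q + 2)).comp
        (((multilinearCurryLeftEquiv ℝ (fun _ : Fin (q + 2) => L) ℝ).symm.toLinearMap).comp
          ((LinearMap.llcomp ℝ L (L →ₗ[ℝ] MultilinearMap ℝ (fun _ : Fin q => L) ℝ)
              (MultilinearMap ℝ (fun _ : Fin (q + 1) => L) ℝ)
              (multilinearCurryLeftEquiv ℝ (fun _ : Fin (q + 1) => L) ℝ).symm.toLinearMap).comp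
            (((LinearMap.lcomp ℝ (L →ₗ[ℝ] MultilinearMap ℝ (fun _ : Fin q => L) ℝ)
                (bracketL L)).comp
              (LinearMap.llcomp ℝ L L (MultilinearMap ℝ (fun _ : Fin q => L) ℝ))).comp
              (((multilinearCurryLeftEquiv ℝ (fun _ : Fin (q + 1) => L) ℝ).toLinearMap).comp
                (toMulti L (q + 1)))))))

/-- The wedge product `β₁ ∧ ⋯ ∧ β_q` of a family of `1`-forms, in determinant
normalization: `(β₁ ∧ ⋯ ∧ β_q)(v₁, …, v_q) = det (βᵢ (v_j))`. -/
noncomputable def wedgeFns {q : ℕ} (β : Fin q → Module.Dual ℝ L) : Form L q :=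
  MultilinearMap.alternatization
    ((MultilinearMap.mkPiAlgebra ℝ (Fin q) ℝ).compLinearMap β)

/-- The subspace `Λ^q V` of `q`-forms spanned by wedges of elements of `V ⊆ 𝔫*`. -/
noncomputable def lambdaPow (V : Submodule ℝ (Module.Dual ℝ L)) (q : ℕ) :
    Submodule ℝ (Form L q) :=
  Submodule.span ℝ
    {x | ∃ β : Fin q → Module.Dual ℝ L, (∀ i, β i ∈ V) ∧ x = wedgeFns L β}

/-- A linear functional viewed as a `1`-form. -/
noncomputable def oneForm : Module.Dual ℝ L →ₗ[ℝ] Form L 1 where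
  toFun x := AlternatingMap.ofSubsingleton ℝ L ℝ (0 : Fin 1) x
  map_add' x y := by ext v; simp
  map_smul' c x := by ext v; simp

/-- The Chevalley–Eilenberg differential on `𝔫* = Λ¹𝔫*`, `(d x)(u,v) = -x ⁅u,v⁆`. -/
noncomputable def dOne : Module.Dual ℝ L →ₗ[ℝ] Form L 2 :=
  (ceDiff L 1).comp (oneForm L)

/-- The `i`-th term `𝔫^i` of the lower central series, as a submodule. -/
noncomputable def lcs (i : ℕ) : Submodule ℝ L :=
  (LieModule.lowerCentralSeries ℝ L L i).toSubmodule

/-- The filtration `V_i = (𝔫^i)°` of `𝔫*` by the annihilators of the lower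
central series. -/
noncomputable def Vfil (i : ℕ) : Submodule ℝ (Module.Dual ℝ L) :=
  (lcs L i).dualAnnihilator

/-- `V_i` for `i : ℤ`, with `V_i = 0` for `i ≤ 0`. -/
noncomputable def VZ (i : ℤ) : Submodule ℝ (Module.Dual ℝ L) := Vfil L i.toNat

/-- `Λ^n V_i` for `i : ℤ`, with the convention coming from the filtration of the
Chevalley–Eilenberg complex: in degree `0` this is `0` for `i ≤ 0` and `ℝ` for `i ≥ 1`. -/
noncomputable def lambdaV (i : ℤ) (n : ℕ) : Submodule ℝ (Form L n) :=
  if i ≤ 0 ∧ n = 0 then ⊥ else lambdaPow L (VZ L i) n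

/-- Wedge product of forms. -/
noncomputable def wedge {a b : ℕ} (x : Form L a) (y : Form L b) : Form L (a + b) :=
  ((LinearMap.mul' ℝ ℝ).compAlternatingMap (x.domCoprod y)).domDomCongr finSumFinEquiv

/-- Cocycles (closed forms). -/
noncomputable def cocycles (n : ℕ) : Submodule ℝ (Form L n) :=
  LinearMap.ker (ceDiff L n)

/-- Coboundaries (exact forms). -/
noncomputable def coboundaries : (n : ℕ) → Submodule ℝ (Form L n)
  | 0 => ⊥
  | (m + 1) => LinearMap.range (ceDiff L m)

/-- Lie algebra cohomology with trivial coefficients `H^n(𝔫) = Z^n/B^n`. -/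
abbrev cohomology (n : ℕ) :=
  @HasQuotient.Quotient ↥(cocycles L n) _ (@Submodule.hasQuotient _ _ _ (Submodule.addCommGroup _) _)
    (Submodule.comap (cocycles L n).subtype (coboundaries L n))

/-- Closed forms in `Λ^n V_i`. -/
noncomputable def Zcl (i : ℤ) (n : ℕ) : Submodule ℝ (Form L n) :=
  lambdaV L i n ⊓ LinearMap.ker (ceDiff L n)

/-- `A^{i,j}_n = {x ∈ Λ^n V_i : dx ∈ Λ^{n+1} V_j}`. -/
noncomputable def Aset (i j : ℤ) (n : ℕ) : Submodule ℝ (Form L n) :=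
  lambdaV L i n ⊓ Submodule.comap (ceDiff L n) (lambdaV L j (n + 1))

/-- Denominator of the limit term of the spectral sequence:
`d({x ∈ Λ^{n-1}𝔫* : dx ∈ Λ^n V_i}) + {x ∈ Λ^n V_{i-1} : dx = 0}`. -/
noncomputable def EinfDen (i : ℤ) : (n : ℕ) → Submodule ℝ (Form L n)
  | 0 => Zcl L (i - 1) 0
  | (m + 1) =>
      Submodule.map (ceDiff L m)
          (Submodule.comap (ceDiff L m) (lambdaV L i (m + 1))) ⊔
        Zcl L (i - 1) (m + 1)

/-- The limit term `E_∞^{p,q}` of the spectral sequence of a `k`-step nilpotent Lie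
algebra: `E_∞^{p,q} = {x ∈ Λ^{p+q}V_{k-p} : dx = 0} /
(d{x ∈ Λ^{p+q-1}𝔫* : dx ∈ Λ^{p+q}V_{k-p}} + {x ∈ Λ^{p+q}V_{k-p-1} : dx = 0})`. -/
abbrev Einf (k : ℕ) (p q : ℤ) :=
  @HasQuotient.Quotient ↥(Zcl L ((k : ℤ) - p) (p + q).toNat) _ (@Submodule.hasQuotient _ _ _ (Submodule.addCommGroup _) _)
    (Submodule.comap (Zcl L ((k : ℤ) - p) (p + q).toNat).subtype
      (EinfDen L ((k : ℤ) - p) (p + q).toNat))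

/-- Numerator `A_r^{p,q}` of the `r`-th page term (for `r = 0` it is `F^pC^{p+q} = Λ^{p+q}V_{k-p}`). -/
noncomputable def ErNum (i : ℤ) (r : ℕ) (n : ℕ) : Submodule ℝ (Form L n) :=
  match r with
  | 0 => lambdaV L i n
  | (r' + 1) => Aset L i (i - (r' + 1)) n

/-- Denominator of the `r`-th page term:
`d(A_{r-1}^{p-r+1,q+r-2}) + A_{r-1}^{p+1,q-1}` for `r ≥ 1`, and `F^{p+1}C^{p+q}` for `r = 0`. -/
noncomputable def ErDen (i : ℤ) (r : ℕ) (n : ℕ) : Submodule ℝ (Form L n) :=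
  match r, n with
  | 0, n => lambdaV L (i - 1) n
  | (r' + 1), 0 => Aset L (i - 1) (i - (r' + 1)) 0
  | (r' + 1), (m + 1) =>
      Submodule.map (ceDiff L m)
          (lambdaV L (i + (r' + 1) - 1) m ⊓
            Submodule.comap (ceDiff L m) (lambdaV L i (m + 1))) ⊔
        Aset L (i - 1) (i - (r' + 1)) (m + 1)

/-- The term `E_r^{p,q}` of the spectral sequence of a `k`-step nilpotent Lie algebra. -/
abbrev Er (k r : ℕ) (p q : ℤ) :=
  @HasQuotient.Quotient ↥(ErNum L ((k : ℤ) - p) r (p + q).toNat) _ (@Submodule.hasQuotient _ _ _ (Submodule.addCommGroup _) _)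
    (Submodule.comap (ErNum L ((k : ℤ) - p) r (p + q).toNat).subtype
      (ErDen L ((k : ℤ) - p) r (p + q).toNat))

end CE


section Aux
open CE
variable (L : Type) [LieRing L] [LieAlgebra ℝ L]

lemma ceDiff_apply (q : ℕ) (x : Form L (q+1)) (v : Fin (q+2) → L) :
    ceDiff L (q+1) x v = (-(1:ℝ) / (2 * q.factorial)) •
      ∑ σ : Equiv.Perm (Fin (q+2)), ((Equiv.Perm.sign σ : ℤ) : ℝ) •
        x (Fin.cons ⁅v (σ 0), v (σ 1)⁆ (fun i => v (σ i.succ.succ))) := by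
  simp only [ceDiff, LinearMap.smul_apply, AlternatingMap.smul_apply, LinearMap.coe_comp,
    Function.comp_apply, altLin, LinearMap.coe_mk, AddHom.coe_mk,
    MultilinearMap.alternatization_apply, MultilinearMap.domDomCongr_apply]
  congr 1
  refine Finset.sum_congr rfl fun σ _ => ?_
  rw [Int.cast_smul_eq_zsmul, ← Units.smul_def]
  rfl

lemma dOne_apply (x : Module.Dual ℝ L) (u v : L) :
    dOne L x ![u, v] = -x ⁅u, v⁆ := by
  have h := ceDiff_apply L 0 (oneForm L x) ![u, v]
  rw [show (Finset.univ : Finset (Equiv.Perm (Fin 2))) = {1, Equiv.swap 0 1} from by decide,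
    Finset.sum_insert (by decide), Finset.sum_singleton] at h
  have h1 : ∀ (a : L) (f : Fin 1 → L), oneForm L x f = x (f 0) := fun a f => rfl
  simp only [dOne, LinearMap.coe_comp, Function.comp_apply]
  rw [h]
  simp only [show ∀ f : Fin 1 → L, oneForm L x f = x (f 0) from fun _ => rfl]
  norm_num
  rw [← lie_skew u v, map_neg]
  ring

lemma cons_two (a : L) (f : Fin 1 → L) : (Fin.cons a f : Fin 2 → L) = ![a, f 0] := by
  funext i; fin_cases i <;> rfl

lemma ceDiff_two_apply (x : Form L 2) (u v w : L) :
    ceDiff L 2 x ![u, v, w]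
      = -(x ![⁅u, v⁆, w] - x ![⁅u, w⁆, v] + x ![⁅v, w⁆, u]) := by
  have hneg : ∀ (a b : L), x ![-a, b] = -x ![a, b] := by
    intro a b
    have h1 : (![(-a), b] : Fin 2 → L) = Function.update ![a, b] 0 (-a) := by
      funext i; fin_cases i <;> simp
    have h2 : (![a, b] : Fin 2 → L) = Function.update ![a, b] 0 a := by
      funext i; fin_cases i <;> simp
    rw [h1, x.map_update_neg, ← h2]
  have h := ceDiff_apply L 1 x ![u, v, w]
  rw [show (Finset.univ : Finset (Equiv.Perm (Fin 3))) =
      {1, Equiv.swap 0 1, Equiv.swap 0 2, Equiv.swap 1 2,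
        Equiv.swap 0 1 * Equiv.swap 1 2, Equiv.swap 1 2 * Equiv.swap 0 1} from by decide,
    Finset.sum_insert (by decide), Finset.sum_insert (by decide),
    Finset.sum_insert (by decide), Finset.sum_insert (by decide),
    Finset.sum_insert (by decide), Finset.sum_singleton] at h
  simp only [cons_two] at h
  norm_num [Equiv.swap_apply_def, Equiv.Perm.mul_apply,
    show Equiv.Perm.sign (1 : Equiv.Perm (Fin 3)) = 1 from by decide,
    show Equiv.Perm.sign (Equiv.swap (0:Fin 3) 1) = -1 from by decide,
    show Equiv.Perm.sign (Equiv.swap (0:Fin 3) 2) = -1 from by decide,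
    show Equiv.Perm.sign (Equiv.swap (1:Fin 3) 2) = -1 from by decide,
    show Equiv.Perm.sign (Equiv.swap (0:Fin 3) 1 * Equiv.swap 1 2) = 1 from by decide,
    show Equiv.Perm.sign (Equiv.swap (1:Fin 3) 2 * Equiv.swap 0 1) = 1 from by decide] at h
  norm_num [show (![u, v, w] : Fin 3 → L) 2 = w from rfl, show ((2:Fin 3) = 0) ↔ False from by decide, show ((2:Fin 3) = 1) ↔ False from by decide,
    show ((1:Fin 3) = 2) ↔ False from by decide, show ((0:Fin 3) = 2) ↔ False from by decide] at h
  rw [h]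
  rw [← lie_skew u v, ← lie_skew v w, ← lie_skew u w, hneg, hneg, hneg]
  ring

lemma wedge_two_apply (a b : Module.Dual ℝ L) (u v : L) :
    wedgeFns L ![a, b] ![u, v] = a u * b v - a v * b u := by
  rw [wedgeFns, MultilinearMap.alternatization_apply,
    show (Finset.univ : Finset (Equiv.Perm (Fin 2))) = {1, Equiv.swap 0 1} from by decide,
    Finset.sum_insert (by decide), Finset.sum_singleton]
  simp only [MultilinearMap.domDomCongr_apply, MultilinearMap.compLinearMap_apply,
    MultilinearMap.mkPiAlgebra_apply, Fin.prod_univ_two]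
  norm_num [Equiv.swap_apply_def,
    show Equiv.Perm.sign (1 : Equiv.Perm (Fin 2)) = 1 from by decide,
    show Equiv.Perm.sign (Equiv.swap (0:Fin 2) 1) = -1 from by decide]
  ring

lemma negpow_eq {a b : ℕ} (h : a % 2 = b % 2) : (-1:ℝ)^a = (-1:ℝ)^b := by
  conv_lhs => rw [← Nat.div_add_mod a 2]
  conv_rhs => rw [← Nat.div_add_mod b 2]
  rw [pow_add, pow_add, pow_mul, pow_mul, h]
  norm_num

lemma form_neg_fst (x : Form L 2) (a b : L) : x ![-a, b] = -x ![a, b] := by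
  have h1 : (![(-a), b] : Fin 2 → L) = Function.update ![a, b] 0 (-a) := by
    funext i; fin_cases i <;> simp
  have h2 : (![a, b] : Fin 2 → L) = Function.update ![a, b] 0 a := by
    funext i; fin_cases i <;> simp
  rw [h1, x.map_update_neg, ← h2]

lemma form_zero_fst (x : Form L 2) (b : L) : x ![0, b] = 0 :=
  x.map_coord_zero 0 rfl

lemma form_sum_apply {n : ℕ} {ι : Type*} (t : Finset ι) (g : ι → Form L n) (v : Fin n → L) :
    (∑ i ∈ t, g i) v = ∑ i ∈ t, g i v := by
  induction t using Finset.cons_induction with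
  | empty => simp
  | cons a t h ih => rw [Finset.sum_cons, Finset.sum_cons, AlternatingMap.add_apply, ih]

end Aux


set_option maxHeartbeats 1000000 in
/-- On `𝔪₀(m)`, for `2 ≤ s ≤ ⌊(m+1)/2⌋`, the `2`-form
`ω_s = ½ ∑_{i=2}^{2s-1} (-1)^i e^i ∧ e^{2s+1-i}` is closed and lies in `Λ²V_{2s-2}` but
not in `Λ²V_{2s-3}`. -/
theorem statement19 (L : Type) [LieRing L] [LieAlgebra ℝ L]
    [FiniteDimensional ℝ L]
    (m : ℕ) (hm2 : 2 ≤ m) (hdim : Module.finrank ℝ L = m)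
    (e : Basis (Fin m) ℝ (Module.Dual ℝ L))
    (hd0 : CE.dOne L (e ⟨0, by omega⟩) = 0)
    (hd1 : CE.dOne L (e ⟨1, by omega⟩) = 0)
    (hds : ∀ i : Fin m, 2 ≤ (i : ℕ) →
      CE.dOne L (e i) =
        CE.wedgeFns L ![e ⟨0, by omega⟩, e ⟨(i : ℕ) - 1, by have := i.isLt; omega⟩])
    (s : ℕ) (hs : 2 ≤ s) (hs' : 2 * s ≤ m + 1)
    (ω : CE.Form L 2)
    (hω : ω = (1 / 2 : ℝ) • ∑ i ∈ (Finset.Icc 2 (2 * s - 1)).attach,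
      ((-1 : ℝ)) ^ ((i : ℕ)) •
        CE.wedgeFns L
          ![e ⟨(i : ℕ) - 1, by have := Finset.mem_Icc.mp i.2; omega⟩,
            e ⟨2 * s - (i : ℕ), by have := Finset.mem_Icc.mp i.2; omega⟩]) :
    CE.ceDiff L 2 ω = 0 ∧
      ω ∈ CE.lambdaPow L (CE.Vfil L (2 * s - 2)) 2 ∧
      ω ∉ CE.lambdaPow L (CE.Vfil L (2 * s - 3)) 2 := by
  classical
  have finext : ∀ (a : Fin m) (t : ℕ) (h : t < m), (a:ℕ) = t → a = ⟨t, h⟩ :=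
    fun a t h ha => Fin.ext (by simpa using ha)
  set fbB : Basis (Fin m) ℝ L := e.dualBasis.map (Module.evalEquiv ℝ L).symm with hfbB
  have hef : ∀ i j : Fin m, e i (fbB j) = if (i:ℕ) = (j:ℕ) then 1 else 0 := by
    intro i j
    rw [hfbB, Basis.map_apply, Module.apply_evalEquiv_symm_apply, Basis.dualBasis_apply_self]
    simp [Fin.ext_iff]
  have sep : ∀ x y : L, (∀ k : Fin m, e k x = e k y) → x = y := by
    intro x y h
    have h2 : Module.Dual.eval ℝ L x = Module.Dual.eval ℝ L y :=
      e.ext fun i => by simpa using h i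
    exact (Module.evalEquiv ℝ L).injective
      (by rw [Module.evalEquiv_apply, Module.evalEquiv_apply]; exact h2)
  have hbr : ∀ (k : Fin m) (u v : L), e k ⁅u, v⁆ = -(CE.dOne L (e k)) ![u, v] := by
    intro k u v; rw [dOne_apply, neg_neg]
  have hbr0 : ∀ u v : L, e ⟨0, by omega⟩ ⁅u, v⁆ = 0 := by
    intro u v; rw [hbr, hd0]; simp
  have hbr1 : ∀ u v : L, e ⟨1, by omega⟩ ⁅u, v⁆ = 0 := by
    intro u v; rw [hbr, hd1]; simp
  have hbr2 : ∀ (k : Fin m), 2 ≤ (k:ℕ) → ∀ u v : L,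
      e k ⁅u, v⁆ = -(e ⟨0, by omega⟩ u * e ⟨(k:ℕ)-1, by have := k.isLt; omega⟩ v
        - e ⟨0, by omega⟩ v * e ⟨(k:ℕ)-1, by have := k.isLt; omega⟩ u) := by
    intro k hk u v; rw [hbr, hds k hk, wedge_two_apply]
  have hbrfb : ∀ (a b k : Fin m),
      e k ⁅fbB a, fbB b⁆ =
        (if (a:ℕ) = 0 ∧ (k:ℕ) = (b:ℕ)+1 then (-1:ℝ) else 0) +
        (if (b:ℕ) = 0 ∧ (k:ℕ) = (a:ℕ)+1 then (1:ℝ) else 0) := by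
    intro a b k
    have hkm := k.isLt
    by_cases hk : 2 ≤ (k:ℕ)
    · rw [hbr2 k hk, hef, hef, hef, hef]
      simp only [Fin.val_mk, true_and, and_true]
      split_ifs <;> first | (exfalso; omega) | norm_num
    · have h0 : e k ⁅fbB a, fbB b⁆ = 0 := by
        by_cases hk0 : (k:ℕ) = 0
        · rw [show k = ⟨0, by omega⟩ from finext _ _ _ (by omega)]; exact hbr0 _ _
        · rw [show k = ⟨1, by omega⟩ from finext _ _ _ (by omega)]; exact hbr1 _ _
      rw [h0]
      split_ifs <;> first | (exfalso; omega) | norm_num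
  have hzz : ∀ a b : Fin m, 1 ≤ (a:ℕ) → 1 ≤ (b:ℕ) → ⁅fbB a, fbB b⁆ = 0 := by
    intro a b ha hb
    refine sep _ _ fun k => ?_
    rw [hbrfb, map_zero]
    split_ifs <;> first | (exfalso; omega) | norm_num
  have hz : ∀ (b : Fin m) (hb1 : 1 ≤ (b:ℕ)) (hbm : (b:ℕ)+1 ≤ m-1),
      ⁅fbB ⟨0, by omega⟩, fbB b⁆ = -(fbB ⟨(b:ℕ)+1, by omega⟩) := by
    intro b hb1 hbm
    refine sep _ _ fun k => ?_
    rw [hbrfb, map_neg, hef]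
    simp only [Fin.val_mk, true_and, and_true]
    split_ifs <;> first | (exfalso; omega) | norm_num
  have hzt : ∀ (b : Fin m), 1 ≤ (b:ℕ) → m - 1 < (b:ℕ)+1 →
      ⁅fbB ⟨0, by omega⟩, fbB b⁆ = 0 := by
    intro b hb1 hbm
    refine sep _ _ fun k => ?_
    have hkm := k.isLt
    rw [hbrfb, map_zero]
    simp only [Fin.val_mk, true_and, and_true]
    split_ifs <;> first | (exfalso; omega) | norm_num
  have ωval : ∀ p q : Fin m, ω ![fbB p, fbB q] =
      (if (p:ℕ)+(q:ℕ) = 2*s-1 ∧ 1 ≤ (p:ℕ) ∧ 1 ≤ (q:ℕ) then (-1:ℝ)^((p:ℕ)+1) else 0) := by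
    intro p q
    rw [hω, AlternatingMap.smul_apply, form_sum_apply]
    by_cases hC : (p:ℕ)+(q:ℕ) = 2*s-1 ∧ 1 ≤ (p:ℕ) ∧ 1 ≤ (q:ℕ)
    · obtain ⟨hC1, hC2, hC3⟩ := hC
      refine Eq.trans (congrArg (fun t => (1/2:ℝ) • t)
        (Finset.sum_congr rfl fun i _ => ?_))
        (?_ : (1/2:ℝ) • (∑ i ∈ (Finset.Icc 2 (2*s-1)).attach,
          ((if ((i:ℕ)) = (p:ℕ)+1 then (-1:ℝ)^((i:ℕ)) else 0)
            - (if ((i:ℕ)) = (q:ℕ)+1 then (-1:ℝ)^((i:ℕ)) else 0))) = _)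
      · have hi := Finset.mem_Icc.mp i.2
        rw [AlternatingMap.smul_apply, wedge_two_apply, hef, hef, hef, hef]
        simp only [Fin.val_mk, smul_eq_mul]
        split_ifs <;> first | (exfalso; omega) | ring
      · rw [Finset.sum_sub_distrib,
          Finset.sum_attach _ (fun n => if n = (p:ℕ)+1 then (-1:ℝ)^n else 0),
          Finset.sum_attach _ (fun n => if n = (q:ℕ)+1 then (-1:ℝ)^n else 0),
          Finset.sum_ite_eq', Finset.sum_ite_eq',
          if_pos (Finset.mem_Icc.mpr ⟨by omega, by omega⟩),
          if_pos (Finset.mem_Icc.mpr ⟨by omega, by omega⟩),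
          if_pos ⟨hC1, hC2, hC3⟩,
          negpow_eq (show ((q:ℕ)+1) % 2 = (p:ℕ) % 2 by omega), pow_succ]
        simp only [smul_eq_mul]; ring
    · refine Eq.trans (congrArg (fun t => (1/2:ℝ) • t)
        (Finset.sum_congr rfl fun i _ => ?_))
        (?_ : (1/2:ℝ) • (∑ _i ∈ (Finset.Icc 2 (2*s-1)).attach, (0:ℝ)) = _)
      · have hi := Finset.mem_Icc.mp i.2
        rw [AlternatingMap.smul_apply, wedge_two_apply, hef, hef, hef, hef]
        simp only [Fin.val_mk, smul_eq_mul]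
        split_ifs <;> first | (exfalso; omega) | ring
      · rw [Finset.sum_const_zero, smul_zero, if_neg hC]
  have hωlie : ∀ a b c : Fin m, ω ![⁅fbB a, fbB b⁆, fbB c] =
      (if (a:ℕ) = 0 ∧ 1 ≤ (b:ℕ) ∧ (b:ℕ)+(c:ℕ) = 2*s-2 ∧ 1 ≤ (c:ℕ) then -(-1:ℝ)^((b:ℕ)) else 0)
      - (if (b:ℕ) = 0 ∧ 1 ≤ (a:ℕ) ∧ (a:ℕ)+(c:ℕ) = 2*s-2 ∧ 1 ≤ (c:ℕ) then -(-1:ℝ)^((a:ℕ)) else 0) := by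
    intro a b c
    have hbm := b.isLt; have ham := a.isLt; have hcm := c.isLt
    by_cases ha : (a:ℕ) = 0 <;> by_cases hb : (b:ℕ) = 0
    · rw [show b = a from Fin.ext (by omega), lie_self, form_zero_fst]
      split_ifs <;> first | (exfalso; omega) | norm_num
    · rw [show a = ⟨0, by omega⟩ from finext _ _ _ (by omega)]
      by_cases hbm2 : (b:ℕ)+1 ≤ m-1
      · rw [hz b (by omega) hbm2, form_neg_fst, ωval]
        simp only [Fin.val_mk, true_and, and_true]
        split_ifs <;>
          first
          | (exfalso; omega)
          | (rw [negpow_eq (show ((b:ℕ)+1+1) % 2 = (b:ℕ) % 2 by omega)]; ring)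
          | norm_num
      · rw [hzt b (by omega) (by omega), form_zero_fst]
        simp only [Fin.val_mk, true_and, and_true]
        split_ifs <;> first | (exfalso; omega) | norm_num
    · rw [show b = ⟨0, by omega⟩ from finext _ _ _ (by omega), ← lie_skew]
      by_cases ham2 : (a:ℕ)+1 ≤ m-1
      · rw [hz a (by omega) ham2, neg_neg, ωval]
        simp only [Fin.val_mk, true_and, and_true]
        split_ifs <;>
          first
          | (exfalso; omega)
          | (rw [negpow_eq (show ((a:ℕ)+1+1) % 2 = (a:ℕ) % 2 by omega)]; ring)
          | norm_num
      · rw [hzt a (by omega) (by omega), neg_zero, form_zero_fst]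
        simp only [Fin.val_mk, true_and, and_true]
        split_ifs <;> first | (exfalso; omega) | norm_num
    · rw [hzz a b (by omega) (by omega), form_zero_fst]
      split_ifs <;> first | (exfalso; omega) | norm_num
  have part1 : CE.ceDiff L 2 ω = 0 := by
    refine Basis.ext_alternating fbB fun v hv => ?_
    have hv3 : (fun i => fbB (v i)) = ![fbB (v 0), fbB (v 1), fbB (v 2)] := by
      funext i; fin_cases i <;> rfl
    rw [hv3, ceDiff_two_apply, hωlie, hωlie, hωlie, AlternatingMap.zero_apply]
    split_ifs <;>
      first
      | (exfalso; omega)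
      | (rw [negpow_eq (show ((v 1 : Fin m):ℕ) % 2 = ((v 2 : Fin m):ℕ) % 2 by omega)]; ring)
      | (rw [negpow_eq (show ((v 0 : Fin m):ℕ) % 2 = ((v 2 : Fin m):ℕ) % 2 by omega)]; ring)
      | (rw [negpow_eq (show ((v 0 : Fin m):ℕ) % 2 = ((v 1 : Fin m):ℕ) % 2 by omega)]; ring)
      | (rw [negpow_eq (show ((v 1 : Fin m):ℕ) % 2 = ((v 0 : Fin m):ℕ) % 2 by omega)]; ring)
      | (rw [negpow_eq (show ((v 2 : Fin m):ℕ) % 2 = ((v 0 : Fin m):ℕ) % 2 by omega)]; ring)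
      | (rw [negpow_eq (show ((v 2 : Fin m):ℕ) % 2 = ((v 1 : Fin m):ℕ) % 2 by omega)]; ring)
      | norm_num
  have hlcs : ∀ (j : ℕ) (k : Fin m), (k:ℕ) ≤ j+1 → CE.lcs L (j+1) ≤ LinearMap.ker (e k) := by
    intro j
    induction j with
    | zero =>
      intro k hk
      rw [CE.lcs, LieModule.lowerCentralSeries_succ, LieSubmodule.lieIdeal_oper_eq_linear_span]
      refine Submodule.span_le.mpr ?_
      rintro _ ⟨x, n, rfl⟩
      simp only [SetLike.mem_coe, LinearMap.mem_ker]
      rcases Nat.le_one_iff_eq_zero_or_eq_one.mp hk with h | h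
      · rw [show k = ⟨0, by omega⟩ from finext _ _ _ (by omega)]; exact hbr0 _ _
      · rw [show k = ⟨1, by omega⟩ from finext _ _ _ (by omega)]; exact hbr1 _ _
    | succ j ih =>
      intro k hk
      rw [CE.lcs, LieModule.lowerCentralSeries_succ, LieSubmodule.lieIdeal_oper_eq_linear_span]
      refine Submodule.span_le.mpr ?_
      rintro _ ⟨x, n, rfl⟩
      simp only [SetLike.mem_coe, LinearMap.mem_ker]
      have hnmem : (n : L) ∈ CE.lcs L (j+1) := n.2
      by_cases hk2 : 2 ≤ (k:ℕ)
      · rw [hbr2 k hk2]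
        have hn1 : e ⟨(k:ℕ)-1, by have := k.isLt; omega⟩ (n:L) = 0 :=
          ih ⟨(k:ℕ)-1, by have := k.isLt; omega⟩ (by simp only [Fin.val_mk, true_and, and_true]; omega) hnmem
        have hn0 : e ⟨0, by omega⟩ (n:L) = 0 :=
          ih ⟨0, by omega⟩ (by simp only [Fin.val_mk, true_and, and_true]; omega) hnmem
        rw [hn1, hn0]; ring
      · rcases Nat.le_one_iff_eq_zero_or_eq_one.mp (by omega : (k:ℕ) ≤ 1) with h | h
        · rw [show k = ⟨0, by omega⟩ from finext _ _ _ (by omega)]; exact hbr0 _ _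
        · rw [show k = ⟨1, by omega⟩ from finext _ _ _ (by omega)]; exact hbr1 _ _
  have hV : ∀ (j : ℕ) (k : Fin m), 1 ≤ j → (k:ℕ) ≤ j → e k ∈ CE.Vfil L j := by
    intro j k hj hk
    rw [CE.Vfil, Submodule.mem_dualAnnihilator]
    intro w hw
    obtain ⟨j', rfl⟩ : ∃ j'', j = j''+1 := ⟨j-1, by omega⟩
    exact hlcs j' k (by omega) hw
  have part2 : ω ∈ CE.lambdaPow L (CE.Vfil L (2*s-2)) 2 := by
    rw [hω]
    refine Submodule.smul_mem _ _ (Submodule.sum_mem _ fun i _ =>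
      Submodule.smul_mem _ _ (Submodule.subset_span ?_))
    have hi := Finset.mem_Icc.mp i.2
    refine ⟨![e ⟨(i:ℕ)-1, by have := Finset.mem_Icc.mp i.2; omega⟩,
      e ⟨2*s-(i:ℕ), by have := Finset.mem_Icc.mp i.2; omega⟩], fun j => ?_, rfl⟩
    fin_cases j
    · exact hV (2*s-2) _ (by omega) (by simp only [Fin.val_mk, true_and, and_true]; omega)
    · exact hV (2*s-2) _ (by omega) (by simp only [Fin.val_mk, true_and, and_true]; omega)
  have hfx : ∀ (t : ℕ) (ht : t+1 ≤ m-1), fbB ⟨t+1, by omega⟩ ∈ CE.lcs L t := by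
    intro t
    induction t with
    | zero =>
      intro h
      rw [CE.lcs, LieModule.lowerCentralSeries_zero]
      exact Submodule.mem_top
    | succ t ih =>
      intro h
      have hb : fbB ⟨t+1, by omega⟩ ∈ CE.lcs L t := ih (by omega)
      have hbr' : ⁅fbB ⟨0, by omega⟩, fbB ⟨t+1, by omega⟩⁆ = -(fbB ⟨t+1+1, by omega⟩) :=
        hz ⟨t+1, by omega⟩ (by simp only [Fin.val_mk, true_and, and_true]; omega) (by simp only [Fin.val_mk, true_and, and_true]; omega)
      have heq : fbB ⟨t+1+1, by omega⟩ = -⁅fbB ⟨0, by omega⟩, fbB ⟨t+1, by omega⟩⁆ := by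
        rw [hbr', neg_neg]
      rw [CE.lcs, LieModule.lowerCentralSeries_succ, LieSubmodule.lieIdeal_oper_eq_linear_span,
        heq]
      exact Submodule.neg_mem _ (Submodule.subset_span
        ⟨⟨fbB ⟨0, by omega⟩, trivial⟩, ⟨fbB ⟨t+1, by omega⟩, hb⟩, rfl⟩)
  have part3 : ω ∉ CE.lambdaPow L (CE.Vfil L (2*s-3)) 2 := by
    intro hmem
    have hmem2 : fbB ⟨2*s-2, by omega⟩ ∈ CE.lcs L (2*s-3) := by
      have h := hfx (2*s-3) (by omega)
      rwa [show (⟨2*s-3+1, by omega⟩ : Fin m) = ⟨2*s-2, by omega⟩ from finext _ _ _ (by simp only [Fin.val_mk, true_and, and_true]; omega)] at h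
    have key : ω ![fbB ⟨1, by omega⟩, fbB ⟨2*s-2, by omega⟩] = 0 := by
      have hmem' := hmem
      rw [CE.lambdaPow] at hmem'
      refine Submodule.span_induction ?_ ?_ ?_ ?_ hmem'
      · rintro x ⟨β, hβ, rfl⟩
        rw [show CE.wedgeFns L β = CE.wedgeFns L ![β 0, β 1] from by
          congr 1; funext j; fin_cases j <;> rfl]
        rw [wedge_two_apply]
        have h0 : β 0 (fbB ⟨2*s-2, by omega⟩) = 0 := by
          have hh := hβ 0
          rw [CE.Vfil, Submodule.mem_dualAnnihilator] at hh
          exact hh _ hmem2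
        have h1 : β 1 (fbB ⟨2*s-2, by omega⟩) = 0 := by
          have hh := hβ 1
          rw [CE.Vfil, Submodule.mem_dualAnnihilator] at hh
          exact hh _ hmem2
        rw [h0, h1]; ring
      · rw [AlternatingMap.zero_apply]
      · intro x y _ _ hx hy; rw [AlternatingMap.add_apply, hx, hy, add_zero]
      · intro c x _ hx; rw [AlternatingMap.smul_apply, hx, smul_zero]
    rw [ωval, if_pos ⟨by simp only [Fin.val_mk, true_and, and_true]; omega, by simp only [Fin.val_mk, true_and, and_true]; omega,
      by simp only [Fin.val_mk, true_and, and_true]; omega⟩] at key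
    simp only [Fin.val_mk, true_and, and_true] at key
    norm_num at key
  exact ⟨part1, part2, part3⟩
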